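/- arXiv:1503.05886 — 3 statements merged into one kernel-verified Lean document; each statement's English description precedes it below -/
import Mathlib

section
/- Let 0 → L₁ → E →^π L₂ → 0 be a holomorphic extension of line bundles over a closed Riemann surface with deg(L₂) > deg(L₁), corresponding to a class [η] ∈ H^{0,1}(L₂* ⊗ L₁). Then div(E) = max{deg(L₁), deg(L₂)} if and only if [η] = 0, i.e., if and only if the extension splits holomorphically. -/
/-!
STATEMENT 7 (div(E) = max{deg L₁, deg L₂} iff the extension splits,
when deg L₂ > deg L₁).  Concrete model over the Riemann sphere: as in the
paper, a holomorphic extension 0 → O(d₁) → E → O(d₂) → 0 is glued over ℂ* by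
T(z) = [[z^{d₁}, a(z)], [0, z^{d₂}]] with a holomorphic on ℂ*.  Its Dolbeault
(≅ Čech) class [η] ∈ H^{0,1}(O(d₁-d₂)) vanishes — equivalently the extension
splits holomorphically — iff the off-diagonal term is a coboundary:
a(z) = z^{d₂}·b_N(z) − z^{d₁}·b_S(1/z) on ℂ* with b_N, b_S entire.
div(E) is the supremum of the degrees of holomorphic line subbundles of E.
-/

/-- `E` glued by `[[z^{d₁}, a(z)], [0, z^{d₂}]]` admits a holomorphic line
subbundle of degree `d`. -/
def HasLineSubbundleOfDeg (d₁ d₂ : ℤ) (a : ℂ → ℂ) (d : ℤ) : Prop :=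
  ∃ sN1 sN2 sS1 sS2 : ℂ → ℂ,
    Differentiable ℂ sN1 ∧ Differentiable ℂ sN2 ∧
    Differentiable ℂ sS1 ∧ Differentiable ℂ sS2 ∧
    (∀ z : ℂ, sN1 z ≠ 0 ∨ sN2 z ≠ 0) ∧
    (∀ z : ℂ, sS1 z ≠ 0 ∨ sS2 z ≠ 0) ∧
    (∀ z : ℂ, z ≠ 0 →
      sN1 z = z ^ (-d) * (z ^ d₁ * sS1 z⁻¹ + a z * sS2 z⁻¹) ∧
      sN2 z = z ^ (-d) * (z ^ d₂ * sS2 z⁻¹))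

open Filter Bornology Topology

private lemma tendsto_zpow_neg_cocompact (k : ℤ) (hk : k < 0) :
    Tendsto (fun z : ℂ => z ^ k) (cocompact ℂ) (𝓝 0) := by
  have hfun : (fun z : ℂ => z ^ k) = fun z : ℂ => (z⁻¹) ^ (-k).toNat := by
    funext z
    rw [inv_pow, ← zpow_natCast, Int.toNat_of_nonneg (by omega), ← zpow_neg, neg_neg]
  rw [hfun]
  have h1 : Tendsto (fun z : ℂ => z⁻¹) (cocompact ℂ) (𝓝 0) := by
    rw [← Metric.cobounded_eq_cocompact]; exact tendsto_inv₀_cobounded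
  have := h1.pow (-k).toNat
  rwa [zero_pow (by omega)] at this

private lemma ne_zero_cocompact : ∀ᶠ z : ℂ in cocompact ℂ, z ≠ 0 := by
  rw [← Metric.cobounded_eq_cocompact]; exact eventually_ne_cobounded 0

/-- An entire function equal to `z^k g(1/z)` (with `k < 0`) on `ℂ*` vanishes identically. -/
private lemma entire_zero_of_rel (f g : ℂ → ℂ) (hf : Differentiable ℂ f)
    (hg : Differentiable ℂ g) (k : ℤ) (hk : k < 0)
    (hrel : ∀ z : ℂ, z ≠ 0 → f z = z ^ k * g z⁻¹) (z : ℂ) : f z = 0 := by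
  apply hf.apply_eq_of_tendsto_cocompact z
  have h1 : Tendsto (fun z : ℂ => z ^ k * g z⁻¹) (cocompact ℂ) (𝓝 (0 * g 0)) := by
    refine (tendsto_zpow_neg_cocompact k hk).mul ?_
    refine (hg.continuous.tendsto 0).comp ?_
    rw [← Metric.cobounded_eq_cocompact]; exact tendsto_inv₀_cobounded
  rw [zero_mul] at h1
  exact h1.congr' (ne_zero_cocompact.mono fun w hw => (hrel w hw).symm)

/-- An entire function equal to `g(1/z)` on `ℂ*` is constantly `g 0`. -/
private lemma entire_const_of_rel (f g : ℂ → ℂ) (hf : Differentiable ℂ f)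
    (hg : Differentiable ℂ g)
    (hrel : ∀ z : ℂ, z ≠ 0 → f z = g z⁻¹) (z : ℂ) : f z = g 0 := by
  apply hf.apply_eq_of_tendsto_cocompact z
  have h1 : Tendsto (fun z : ℂ => g z⁻¹) (cocompact ℂ) (𝓝 (g 0)) := by
    refine (hg.continuous.tendsto 0).comp ?_
    rw [← Metric.cobounded_eq_cocompact]; exact tendsto_inv₀_cobounded
  exact h1.congr' (ne_zero_cocompact.mono fun w hw => (hrel w hw).symm)

/-- Any line subbundle of the extension has degree at most `d₂` (the larger degree). -/
private lemma deg_le (d₁ d₂ : ℤ) (h12 : d₁ < d₂) (a : ℂ → ℂ) (d : ℤ)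
    (hd : HasLineSubbundleOfDeg d₁ d₂ a d) : d ≤ d₂ := by
  by_contra hcon
  push_neg at hcon
  obtain ⟨sN1, sN2, sS1, sS2, hN1, hN2, hS1, hS2, hNv, _, hrel⟩ := hd
  have key2 : ∀ z : ℂ, z ≠ 0 → sN2 z = z ^ (d₂ - d) * sS2 z⁻¹ := by
    intro z hz
    have e : -d + d₂ = d₂ - d := by ring
    rw [(hrel z hz).2, ← mul_assoc, ← zpow_add₀ hz, e]
  have hN2z : ∀ z, sN2 z = 0 :=
    entire_zero_of_rel sN2 sS2 hN2 hS2 (d₂ - d) (by omega) key2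
  have hS2z : ∀ w : ℂ, w ≠ 0 → sS2 w = 0 := by
    intro w hw
    have h := key2 w⁻¹ (inv_ne_zero hw)
    rw [hN2z, inv_inv] at h
    rcases mul_eq_zero.mp h.symm with h' | h'
    · exact absurd h' (zpow_ne_zero _ (inv_ne_zero hw))
    · exact h'
  have key1 : ∀ z : ℂ, z ≠ 0 → sN1 z = z ^ (d₁ - d) * sS1 z⁻¹ := by
    intro z hz
    have e : -d + d₁ = d₁ - d := by ring
    rw [(hrel z hz).1, hS2z z⁻¹ (inv_ne_zero hz), mul_zero, add_zero,
      ← mul_assoc, ← zpow_add₀ hz, e]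
  have hN1z : sN1 0 = 0 :=
    entire_zero_of_rel sN1 sS1 hN1 hS1 (d₁ - d) (by omega) key1 0
  rcases hNv 0 with h | h
  · exact h hN1z
  · exact h (hN2z 0)

theorem divE_eq_max_iff_split
    (d₁ d₂ : ℤ) (h12 : d₁ < d₂)
    (a : ℂ → ℂ) (ha : DifferentiableOn ℂ a {z : ℂ | z ≠ 0}) :
    sSup {d : ℤ | HasLineSubbundleOfDeg d₁ d₂ a d} = max d₁ d₂ ↔
    ∃ bN bS : ℂ → ℂ, Differentiable ℂ bN ∧ Differentiable ℂ bS ∧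
      ∀ z : ℂ, z ≠ 0 → a z = z ^ d₂ * bN z - z ^ d₁ * bS z⁻¹ := by
  set S : Set ℤ := {d : ℤ | HasLineSubbundleOfDeg d₁ d₂ a d} with hS
  have hbdd : BddAbove S := ⟨d₂, fun b hb => deg_le d₁ d₂ h12 a b hb⟩
  have hmem1 : d₁ ∈ S := by
    refine ⟨fun _ => 1, fun _ => 0, fun _ => 1, fun _ => 0,
      differentiable_const _, differentiable_const _, differentiable_const _,
      differentiable_const _, fun z => Or.inl one_ne_zero, fun z => Or.inl one_ne_zero,
      fun z hz => ⟨?_, ?_⟩⟩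
    · rw [mul_zero, add_zero, mul_one, ← zpow_add₀ hz, neg_add_cancel, zpow_zero]
    · rw [mul_zero, mul_zero]
  rw [max_eq_right h12.le]
  constructor
  · intro h
    have hmem2 : d₂ ∈ S := h ▸ Int.csSup_mem ⟨d₁, hmem1⟩ hbdd
    obtain ⟨sN1, sN2, sS1, sS2, hN1, hN2, hS1, hS2, hNv, _, hrel⟩ := hmem2
    have key2 : ∀ z : ℂ, z ≠ 0 → sN2 z = sS2 z⁻¹ := by
      intro z hz
      rw [(hrel z hz).2, ← mul_assoc, ← zpow_add₀ hz, neg_add_cancel, zpow_zero, one_mul]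
    set c : ℂ := sS2 0 with hc
    have hN2c : ∀ z, sN2 z = c := entire_const_of_rel sN2 sS2 hN2 hS2 key2
    have hS2c : ∀ w : ℂ, w ≠ 0 → sS2 w = c := by
      intro w hw
      rw [← hN2c w⁻¹, key2 w⁻¹ (inv_ne_zero hw), inv_inv]
    rcases eq_or_ne c 0 with hc0 | hc0
    · exfalso
      have key1 : ∀ z : ℂ, z ≠ 0 → sN1 z = z ^ (d₁ - d₂) * sS1 z⁻¹ := by
        intro z hz
        have e : -d₂ + d₁ = d₁ - d₂ := by ring
        rw [(hrel z hz).1, hS2c z⁻¹ (inv_ne_zero hz), hc0, mul_zero, add_zero,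
          ← mul_assoc, ← zpow_add₀ hz, e]
      have hN1z : sN1 0 = 0 :=
        entire_zero_of_rel sN1 sS1 hN1 hS1 (d₁ - d₂) (by omega) key1 0
      rcases hNv 0 with h' | h'
      · exact h' hN1z
      · exact h' (by rw [hN2c 0, hc0])
    · refine ⟨fun z => c⁻¹ * sN1 z, fun z => c⁻¹ * sS1 z,
        (differentiable_const _).mul hN1, (differentiable_const _).mul hS1, fun z hz => ?_⟩
      have h5 : z ^ d₂ * sN1 z = z ^ d₁ * sS1 z⁻¹ + a z * c := by
        rw [(hrel z hz).1, hS2c z⁻¹ (inv_ne_zero hz), ← mul_assoc, ← zpow_add₀ hz,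
          add_neg_cancel, zpow_zero, one_mul]
      calc a z = (z ^ d₁ * sS1 z⁻¹ + a z * c - z ^ d₁ * sS1 z⁻¹) * c⁻¹ := by
            field_simp
            ring
        _ = (z ^ d₂ * sN1 z - z ^ d₁ * sS1 z⁻¹) * c⁻¹ := by rw [← h5]
        _ = z ^ d₂ * (c⁻¹ * sN1 z) - z ^ d₁ * (c⁻¹ * sS1 z⁻¹) := by ring
  · rintro ⟨bN, bS, hbN, hbS, hab⟩
    have hmem2 : d₂ ∈ S := by
      refine ⟨bN, fun _ => 1, bS, fun _ => 1, hbN, differentiable_const _, hbS,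
        differentiable_const _, fun z => Or.inr one_ne_zero, fun z => Or.inr one_ne_zero,
        fun z hz => ⟨?_, ?_⟩⟩
      · have e1 : z ^ d₁ * bS z⁻¹ + a z * 1 = z ^ d₂ * bN z := by
          rw [mul_one, hab z hz]; ring
        rw [e1, ← mul_assoc, ← zpow_add₀ hz, neg_add_cancel, zpow_zero, one_mul]
      · rw [mul_one, ← zpow_add₀ hz, neg_add_cancel, zpow_zero]
    exact le_antisymm (csSup_le ⟨d₂, hmem2⟩ fun b hb => deg_le d₁ d₂ h12 a b hb)
      (le_csSup hbdd hmem2)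
end

section
/- Let f(w) = ∫_{S²} ρ(w′) · ww′/(w − w′) dν(w′) where ρ(w′) = (w′)^{k−2} M(w′) with M bounded on {|w′| ≤ 2} and ρ integrable, k ≥ 2. Then f can be written near w = 0 as f = O − p_f, where p_f(w) = Σ_{j=1}^{k−1} b_j w^j with b_j = ∫_{S²} ρ(w′)(w′)^{−j+1} dν(w′), and O satisfies |O(w)| ≤ C|w|^k for |w| ≤ 1 and some constant C > 0. -/
/-!
STATEMENT 13 (polynomial part of f(w) = ∫ ρ(w′)·ww′/(w−w′) dν(w′)).
ν is the area measure of the round sphere of total area 1; in the chart w it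
is `dν = sphDens·dA` with `sphDens w = (π(1+|w|²)²)⁻¹`.  Given
ρ(w′) = (w′)^{k−2}·M(w′) with M bounded on {|w′| ≤ 2} and the integrability
stated below, set b_j = ∫ ρ(w′)(w′)^{−j+1} dν(w′) for 1 ≤ j ≤ k−1 and
p_f(w) = Σ_{j=1}^{k−1} b_j w^j.  Then O = f + p_f satisfies |O(w)| ≤ C|w|^k
on |w| ≤ 1 for some C > 0, i.e. f = O − p_f.
-/

open MeasureTheory

/-- Density of the spherical area measure (sphere of area 1) against planar
Lebesgue measure in a stereographic chart. -/
noncomputable def sphDens (w : ℂ) : ℝ :=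
  (Real.pi * (1 + ‖w‖ ^ 2) ^ 2)⁻¹

private lemma key_sum (m : ℕ) (w w' : ℂ) (h0 : w' ≠ 0) (hww : w - w' ≠ 0) :
    w * w' / (w - w') + ∑ j ∈ Finset.Icc 1 (m + 1), w' ^ (1 - (j : ℤ)) * w ^ j
      = w ^ (m + 2) * ((w' ^ m)⁻¹ * (w - w')⁻¹) := by
  induction m with
  | zero =>
      simp only [Finset.Icc_self, Finset.sum_singleton, Nat.cast_one, sub_self, zpow_zero,
        one_mul, pow_one, pow_zero, inv_one]
      field_simp
      ring
  | succ n ih =>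
      have hs : ∑ j ∈ Finset.Icc 1 (n + 1 + 1), w' ^ (1 - (j : ℤ)) * w ^ j
          = (∑ j ∈ Finset.Icc 1 (n + 1), w' ^ (1 - (j : ℤ)) * w ^ j)
            + w' ^ (1 - ((n + 1 + 1 : ℕ) : ℤ)) * w ^ (n + 1 + 1) :=
        Finset.sum_Icc_succ_top (by omega) _
      have hz : w' ^ (1 - ((n + 1 + 1 : ℕ) : ℤ)) = (w' ^ (n + 1))⁻¹ := by
        rw [show (1 - ((n + 1 + 1 : ℕ) : ℤ)) = -((n + 1 : ℕ) : ℤ) by push_cast; ring,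
          zpow_neg, zpow_natCast]
      rw [hs, ← add_assoc, ih, hz]
      have hp : (w' : ℂ) ^ (n + 1) ≠ 0 := pow_ne_zero _ h0
      have hpn : (w' : ℂ) ^ n ≠ 0 := pow_ne_zero _ h0
      field_simp
      ring

private lemma re_line_null (a : ℝ) : (volume : Measure ℂ) {z : ℂ | z.re = a} = 0 := by
  have hp := Complex.volume_preserving_equiv_real_prod
  have hset : {z : ℂ | z.re = a}
      = ⇑Complex.measurableEquivRealProd ⁻¹' ({a} ×ˢ (Set.univ : Set ℝ)) := by
    ext z
    simp [Complex.measurableEquivRealProd_apply, eq_comm]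
  rw [hset, hp.measure_preimage
    (((measurableSet_singleton a).prod MeasurableSet.univ).nullMeasurableSet)]
  rw [MeasureTheory.Measure.volume_eq_prod ℝ ℝ, Measure.prod_prod]
  simp

private lemma im_line_null (a : ℝ) : (volume : Measure ℂ) {z : ℂ | z.im = a} = 0 := by
  have hp := Complex.volume_preserving_equiv_real_prod
  have hset : {z : ℂ | z.im = a}
      = ⇑Complex.measurableEquivRealProd ⁻¹' ((Set.univ : Set ℝ) ×ˢ {a}) := by
    ext z
    simp [Complex.measurableEquivRealProd_apply, eq_comm]
  rw [hset, hp.measure_preimage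
    ((MeasurableSet.univ.prod (measurableSet_singleton a)).nullMeasurableSet)]
  rw [MeasureTheory.Measure.volume_eq_prod ℝ ℝ, Measure.prod_prod]
  simp

/-- the auxiliary one-dimensional weight `|t|^{-1/2}` cut off to `[-3,3]`. -/
noncomputable def auxQ : ℝ → ℝ :=
  Set.indicator (Set.Icc (-3) 3) (fun t => |t| ^ (-(1/2) : ℝ))

private lemma auxQ_nonneg (t : ℝ) : 0 ≤ auxQ t := by
  unfold auxQ
  apply Set.indicator_nonneg
  intro x _
  positivity

private lemma auxQ_meas : Measurable auxQ := by
  unfold auxQ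
  exact (measurable_id.abs.pow_const _).indicator measurableSet_Icc

private lemma auxQ_integrable : Integrable auxQ := by
  have hg : Measurable fun t : ℝ => |t| ^ (-(1/2) : ℝ) :=
    measurable_id.abs.pow_const _
  -- integrable on [0,3]
  have h1 : IntegrableOn (fun t : ℝ => |t| ^ (-(1/2) : ℝ)) (Set.Icc 0 3) := by
    have h2 : IntervalIntegrable (fun t : ℝ => t ^ (-(1/2) : ℝ)) volume 0 3 :=
      intervalIntegral.intervalIntegrable_rpow' (by norm_num)
    have h3 : IntegrableOn (fun t : ℝ => t ^ (-(1/2) : ℝ)) (Set.Ioc 0 3) := by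
      simpa [intervalIntegrable_iff_integrableOn_Ioc_of_le (by norm_num : (0:ℝ) ≤ 3)] using h2
    have h4 : IntegrableOn (fun t : ℝ => t ^ (-(1/2) : ℝ)) (Set.Icc 0 3) := by
      rwa [integrableOn_Icc_iff_integrableOn_Ioc]
    refine h4.congr_fun (fun t ht => ?_) measurableSet_Icc
    rw [abs_of_nonneg ht.1]
  have h1' : Integrable (Set.indicator (Set.Icc (0:ℝ) 3) (fun t => |t| ^ (-(1/2) : ℝ))) := by
    rwa [integrable_indicator_iff measurableSet_Icc]
  -- integrable on [-3,0] via reflection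
  have h5 : Integrable (fun t : ℝ =>
      Set.indicator (Set.Icc (0:ℝ) 3) (fun t => |t| ^ (-(1/2) : ℝ)) (0 - t)) :=
    h1'.comp_sub_left 0
  have h5' : Integrable (fun t : ℝ =>
      Set.indicator (Set.Icc (0:ℝ) 3) (fun t => |t| ^ (-(1/2) : ℝ)) (-t)) := by
    simpa using h5
  -- dominate auxQ
  refine Integrable.mono' (h5'.add h1') auxQ_meas.aestronglyMeasurable
    (Filter.Eventually.of_forall fun t => ?_)
  rw [Real.norm_of_nonneg (auxQ_nonneg t)]
  simp only [Pi.add_apply]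
  unfold auxQ
  by_cases ht : t ∈ Set.Icc (-3:ℝ) 3
  · rw [Set.indicator_of_mem ht]
    rcases le_or_gt 0 t with h | h
    · have htm : t ∈ Set.Icc (0:ℝ) 3 := ⟨h, ht.2⟩
      have := Set.indicator_nonneg (fun x _ => by positivity :
        ∀ x ∈ Set.Icc (0:ℝ) 3, 0 ≤ |x| ^ (-(1/2) : ℝ)) (-t)
      rw [Set.indicator_of_mem htm]
      linarith
    · have htm : -t ∈ Set.Icc (0:ℝ) 3 := ⟨by linarith, by linarith [ht.1]⟩
      have := Set.indicator_nonneg (fun x _ => by positivity :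
        ∀ x ∈ Set.Icc (0:ℝ) 3, 0 ≤ |x| ^ (-(1/2) : ℝ)) t
      rw [Set.indicator_of_mem htm, abs_neg]
      linarith
  · rw [Set.indicator_of_notMem ht]
    have h6 := Set.indicator_nonneg (fun x _ => by positivity :
      ∀ x ∈ Set.Icc (0:ℝ) 3, 0 ≤ |x| ^ (-(1/2) : ℝ)) (-t)
    have h7 := Set.indicator_nonneg (fun x _ => by positivity :
      ∀ x ∈ Set.Icc (0:ℝ) 3, 0 ≤ |x| ^ (-(1/2) : ℝ)) t
    linarith

/-- the planar dominating weight. -/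
noncomputable def auxPsi : ℂ → ℝ := fun u => auxQ u.re * auxQ u.im

private lemma auxPsi_nonneg (u : ℂ) : 0 ≤ auxPsi u :=
  mul_nonneg (auxQ_nonneg _) (auxQ_nonneg _)

private lemma auxPsi_integrable : Integrable auxPsi := by
  have h2 : Integrable (fun p : ℝ × ℝ => auxQ p.1 * auxQ p.2) := by
    rw [MeasureTheory.Measure.volume_eq_prod ℝ ℝ]
    exact auxQ_integrable.mul_prod auxQ_integrable
  have h3 := (Complex.volume_preserving_equiv_real_prod.integrable_comp_emb
    (MeasurableEquiv.measurableEmbedding _)).2 h2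
  have h4 : ((fun p : ℝ × ℝ => auxQ p.1 * auxQ p.2) ∘ ⇑Complex.measurableEquivRealProd)
      = auxPsi := by
    funext z
    simp [Function.comp, Complex.measurableEquivRealProd_apply, auxPsi]
  rwa [h4] at h3

private lemma auxPsi_big (u : ℂ) (hre : u.re ≠ 0) (him : u.im ≠ 0)
    (habs : ‖u‖ ≤ 3) : (‖u‖)⁻¹ ≤ auxPsi u := by
  have h1 : |u.re| ≤ 3 := (Complex.abs_re_le_norm u).trans habs
  have h2 : |u.im| ≤ 3 := (Complex.abs_im_le_norm u).trans habs
  have hre' : 0 < |u.re| := abs_pos.2 hre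
  have him' : 0 < |u.im| := abs_pos.2 him
  have hu : 0 < ‖u‖ := by
    have := Complex.abs_re_le_norm u; linarith
  have hq1 : auxQ u.re = |u.re| ^ (-(1/2) : ℝ) :=
    Set.indicator_of_mem (Set.mem_Icc.2 (abs_le.mp h1)) _
  have hq2 : auxQ u.im = |u.im| ^ (-(1/2) : ℝ) :=
    Set.indicator_of_mem (Set.mem_Icc.2 (abs_le.mp h2)) _
  have hmul : |u.re| * |u.im| ≤ (‖u‖) ^ 2 := by
    have h3 : (‖u‖) ^ 2 = u.re ^ 2 + u.im ^ 2 := by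
      rw [Complex.sq_norm, Complex.normSq_apply]; ring
    nlinarith [sq_nonneg (|u.re| - |u.im|), sq_abs u.re, sq_abs u.im]
  have heq : ((‖u‖) ^ 2 : ℝ) ^ (-(1/2) : ℝ) = (‖u‖)⁻¹ := by
    rw [← Real.rpow_natCast (‖u‖) 2, ← Real.rpow_mul (norm_nonneg u)]
    norm_num
    rw [Real.rpow_neg_one]
  calc (‖u‖)⁻¹ = ((‖u‖) ^ 2 : ℝ) ^ (-(1/2) : ℝ) := heq.symm
    _ ≤ (|u.re| * |u.im|) ^ (-(1/2) : ℝ) :=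
        Real.rpow_le_rpow_of_nonpos (by positivity) hmul (by norm_num)
    _ = auxPsi u := by
        rw [Real.mul_rpow hre'.le him'.le]
        unfold auxPsi
        rw [hq1, hq2]

private lemma sphDens_nonneg (u : ℂ) : 0 ≤ sphDens u := by
  unfold sphDens
  have := Real.pi_pos
  positivity

private lemma sphDens_le (u : ℂ) : sphDens u ≤ Real.pi⁻¹ := by
  unfold sphDens
  have hπ := Real.pi_pos
  have h1 : (1:ℝ) ≤ (1 + ‖u‖ ^ 2) ^ 2 := by
    nlinarith [sq_nonneg (‖u‖)]
  have h2 : Real.pi ≤ Real.pi * (1 + ‖u‖ ^ 2) ^ 2 := by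
    nlinarith
  exact inv_anti₀ hπ h2

theorem polynomial_part_of_cauchy_type_integral
    (k : ℕ) (hk : 2 ≤ k) (ρ M : ℂ → ℂ)
    (hρM : ∀ w' : ℂ, ρ w' = w' ^ (k - 2) * M w')
    (hM : ∃ B : ℝ, ∀ w' : ℂ, ‖w'‖ ≤ 2 → ‖M w'‖ ≤ B)
    -- integrability of the moment integrands (this includes the b_j's and
    -- the term ρ/(w′)^{k−1} used at the south chart):
    (hint : ∀ j : ℤ, 0 ≤ j → j ≤ (k : ℤ) - 1 →
      Integrable (fun w' : ℂ => sphDens w' • (ρ w' * w' ^ (-j))))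
    -- integrability of the Cauchy-type kernel against ρ:
    (hker : ∀ w : ℂ,
      Integrable (fun w' : ℂ => sphDens w' • (ρ w' * (w * w' / (w - w'))))) :
    ∃ C : ℝ, 0 < C ∧ ∀ w : ℂ, ‖w‖ ≤ 1 →
      ‖(∫ w' : ℂ, sphDens w' • (ρ w' * (w * w' / (w - w')))) +
        ∑ j ∈ Finset.Icc 1 (k - 1),
          (∫ w' : ℂ, sphDens w' • (ρ w' * w' ^ (1 - (j : ℤ)))) * w ^ j‖ ≤
      C * ‖w‖ ^ k := by
  obtain ⟨m, rfl⟩ : ∃ m, k = m + 2 := ⟨k - 2, by omega⟩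
  obtain ⟨B, hB⟩ := hM
  set B0 : ℝ := max B 0 with hB0def
  have hB0 : ∀ w' : ℂ, ‖w'‖ ≤ 2 → ‖M w'‖ ≤ B0 :=
    fun w' h => (hB w' h).trans (le_max_left _ _)
  have hB0nn : 0 ≤ B0 := le_max_right _ _
  set c : ℝ := Real.pi⁻¹ * B0 with hcdef
  have hcnn : 0 ≤ c := mul_nonneg (inv_nonneg.mpr Real.pi_pos.le) hB0nn
  -- the "far" integrable majorant
  have hG' : Integrable (fun w' : ℂ => sphDens w' • (ρ w' * w' ^ (-((m : ℤ) + 1)))) := by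
    have := hint ((m : ℤ) + 1) (by positivity) (by push_cast; omega)
    simpa using this
  set K : ℝ := ∫ u : ℂ, auxPsi u with hKdef
  have hKnn : 0 ≤ K := integral_nonneg auxPsi_nonneg
  set L : ℝ := ∫ w' : ℂ, ‖sphDens w' • (ρ w' * w' ^ (-((m : ℤ) + 1)))‖ with hLdef
  have hLnn : 0 ≤ L := integral_nonneg fun _ => norm_nonneg _
  refine ⟨c * K + 2 * L + 1, by positivity, fun w hw => ?_⟩
  -- bound on ρ·w'^{-m} inside the disc of radius 2
  have hrb : ∀ w' : ℂ, ‖w'‖ ≤ 2 → ‖ρ w' * w' ^ (-(m : ℤ))‖ ≤ B0 := by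
    intro w' h2
    rcases eq_or_ne w' 0 with rfl | h0
    · rcases Nat.eq_zero_or_pos m with hm | hm
      · subst hm
        rw [hρM]
        simpa using hB0 0 (by simp)
      · have hz : ρ 0 = 0 := by
          rw [hρM, show (m + 2 - 2 : ℕ) = m from by omega, zero_pow hm.ne', zero_mul]
        simp [hz, hB0nn]
    · have heq : ρ w' * w' ^ (-(m : ℤ)) = M w' := by
        rw [hρM, zpow_neg, zpow_natCast]
        have hpm : w' ^ m ≠ 0 := pow_ne_zero _ h0
        have : (m + 2 - 2 : ℕ) = m := by omega
        rw [this]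
        field_simp
      rw [heq]
      exact hB0 w' h2
  -- integrability of the summand integrands
  have hGj : ∀ j ∈ Finset.Icc 1 (m + 1),
      Integrable (fun w' : ℂ => sphDens w' • (ρ w' * w' ^ (1 - (j : ℤ))) * w ^ j) := by
    intro j hj
    rw [Finset.mem_Icc] at hj
    have h1 := hint ((j : ℤ) - 1) (by omega) (by push_cast; omega)
    have h2 : (fun w' : ℂ => sphDens w' • (ρ w' * w' ^ (1 - (j : ℤ))))
        = (fun w' : ℂ => sphDens w' • (ρ w' * w' ^ (-((j : ℤ) - 1)))) := by
      funext w'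
      rw [show (1 - (j : ℤ)) = -((j : ℤ) - 1) by ring]
    exact (h2 ▸ h1).mul_const _
  -- combine the integrals into a single one
  have hcomb :
      (∫ w' : ℂ, sphDens w' • (ρ w' * (w * w' / (w - w')))) +
        ∑ j ∈ Finset.Icc 1 (m + 1),
          (∫ w' : ℂ, sphDens w' • (ρ w' * w' ^ (1 - (j : ℤ)))) * w ^ j
      = ∫ w' : ℂ, (sphDens w' • (ρ w' * (w * w' / (w - w'))) +
          ∑ j ∈ Finset.Icc 1 (m + 1),
            sphDens w' • (ρ w' * w' ^ (1 - (j : ℤ))) * w ^ j) := by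
    rw [integral_add (hker w) (integrable_finset_sum _ hGj),
      integral_finset_sum _ hGj]
    simp_rw [integral_mul_const]
  -- the combined integrand equals `w^(m+2) • g̃` a.e.
  set g : ℂ → ℂ := fun w' =>
    (sphDens w' • (ρ w' * w' ^ (-(m : ℤ)))) * (w - w')⁻¹ with hgdef
  have hae : (fun w' : ℂ => sphDens w' • (ρ w' * (w * w' / (w - w'))) +
      ∑ j ∈ Finset.Icc 1 (m + 1),
        sphDens w' • (ρ w' * w' ^ (1 - (j : ℤ))) * w ^ j)
      =ᵐ[volume] fun w' => w ^ (m + 2) • g w' := by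
    have h0 : ∀ᵐ w' : ℂ, w' ≠ 0 := by
      rw [ae_iff]
      simpa using measure_singleton (0 : ℂ)
    have h1 : ∀ᵐ w' : ℂ, w' ≠ w := by
      rw [ae_iff]
      simpa using measure_singleton w
    filter_upwards [h0, h1] with w' hw0 hw1
    have hsub : w - w' ≠ 0 := sub_ne_zero.mpr (Ne.symm hw1)
    have hkey := key_sum m w w' hw0 hsub
    simp only [hgdef, Complex.real_smul, smul_eq_mul]
    have expand : ∑ j ∈ Finset.Icc 1 (m + 1),
        (sphDens w' : ℂ) * (ρ w' * w' ^ (1 - (j : ℤ))) * w ^ j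
        = (sphDens w' : ℂ) * ρ w' *
          ∑ j ∈ Finset.Icc 1 (m + 1), w' ^ (1 - (j : ℤ)) * w ^ j := by
      rw [Finset.mul_sum]
      exact Finset.sum_congr rfl fun j _ => by ring
    rw [expand, show (sphDens w' : ℂ) * (ρ w' * (w * w' / (w - w')))
      = (sphDens w' : ℂ) * ρ w' * (w * w' / (w - w')) from by ring,
      ← mul_add, hkey, zpow_neg, zpow_natCast]
    ring
  -- the dominating function
  set h : ℂ → ℝ := fun w' =>
    c * auxPsi (w - w') + 2 * ‖sphDens w' • (ρ w' * w' ^ (-((m : ℤ) + 1)))‖ with hhdef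
  have hhint : Integrable h :=
    ((auxPsi_integrable.comp_sub_left w).const_mul c).add (hG'.norm.const_mul 2)
  have hhval : ∫ w' : ℂ, h w' = c * K + 2 * L := by
    rw [hhdef]
    rw [integral_add ((auxPsi_integrable.comp_sub_left w).const_mul c)
      (hG'.norm.const_mul 2), integral_const_mul, integral_const_mul,
      integral_sub_left_eq_self auxPsi volume w, hKdef, hLdef]
  -- a.e. domination of ‖g‖ by h
  have hdom : ∀ᵐ w' : ℂ, ‖g w'‖ ≤ h w' := by
    have hre : ∀ᵐ w' : ℂ, (w - w').re ≠ 0 := by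
      rw [ae_iff]
      have hset : {w' : ℂ | ¬ (w - w').re ≠ 0} = {w' : ℂ | w'.re = w.re} := by
        ext z
        simp only [Set.mem_setOf_eq, not_not, Complex.sub_re, sub_eq_zero]
        exact eq_comm
      rw [hset]
      exact re_line_null w.re
    have him : ∀ᵐ w' : ℂ, (w - w').im ≠ 0 := by
      rw [ae_iff]
      have hset : {w' : ℂ | ¬ (w - w').im ≠ 0} = {w' : ℂ | w'.im = w.im} := by
        ext z
        simp only [Set.mem_setOf_eq, not_not, Complex.sub_im, sub_eq_zero]
        exact eq_comm
      rw [hset]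
      exact im_line_null w.im
    filter_upwards [hre, him] with w' hre' him'
    have hgn : ‖g w'‖ = sphDens w' * ‖ρ w' * w' ^ (-(m : ℤ))‖ * ‖(w - w')⁻¹‖ := by
      rw [hgdef]
      rw [norm_mul, norm_smul, Real.norm_of_nonneg (sphDens_nonneg w')]
    rcases le_or_gt (‖w'‖) 2 with h2 | h2
    · -- near region
      have hb1 : ‖g w'‖ ≤ c * ‖(w - w')⁻¹‖ := by
        rw [hgn, hcdef]
        have := mul_le_mul (sphDens_le w') (hrb w' h2) (norm_nonneg _)
          (inv_nonneg.mpr Real.pi_pos.le)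
        exact mul_le_mul_of_nonneg_right this (norm_nonneg _)
      have hb2 : ‖(w - w')⁻¹‖ ≤ auxPsi (w - w') := by
        rw [norm_inv]
        apply auxPsi_big _ hre' him'
        calc ‖w - w'‖ ≤ ‖w‖ + ‖w'‖ := by
              simpa using norm_sub_le w w'
          _ ≤ 3 := by linarith
      calc ‖g w'‖ ≤ c * ‖(w - w')⁻¹‖ := hb1
        _ ≤ c * auxPsi (w - w') := mul_le_mul_of_nonneg_left hb2 hcnn
        _ ≤ h w' := by
            rw [show h w' = c * auxPsi (w - w')
              + 2 * ‖sphDens w' • (ρ w' * w' ^ (-((m : ℤ) + 1)))‖ from rfl]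
            have : 0 ≤ 2 * ‖sphDens w' • (ρ w' * w' ^ (-((m : ℤ) + 1)))‖ := by positivity
            linarith
    · -- far region
      have hw0 : w' ≠ 0 := by
        intro hz
        rw [hz] at h2
        simp at h2
        linarith
      have habs : (0:ℝ) < ‖w'‖ := by positivity
      have hfar : ‖w'‖ ≤ 2 * ‖w - w'‖ := by
        have h3 : ‖w'‖ - ‖w‖ ≤ ‖w - w'‖ := by
          have := norm_sub_norm_le (w' : ℂ) w
          rw [show ‖w' - w‖ = ‖w - w'‖ from by rw [norm_sub_rev]] at this
          simpa using this
        linarith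
      have hsub0 : ‖w - w'‖ ≠ 0 := by
        intro hz
        rw [hz] at hfar
        linarith
      have hinv : ‖(w - w')⁻¹‖ ≤ 2 * (‖w'‖)⁻¹ := by
        rw [norm_inv]
        have h3 : ‖w'‖ / 2 ≤ ‖w - w'‖ := by linarith
        have h4 : (0:ℝ) < ‖w'‖ / 2 := by linarith
        calc (‖w - w'‖)⁻¹ ≤ (‖w'‖ / 2)⁻¹ := inv_anti₀ h4 h3
          _ = 2 * (‖w'‖)⁻¹ := by
              rw [inv_div, div_eq_mul_inv]
      have hzp : ‖ρ w' * w' ^ (-((m : ℤ) + 1))‖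
          = ‖ρ w' * w' ^ (-(m : ℤ))‖ * (‖w'‖)⁻¹ := by
        rw [norm_mul, norm_mul]
        rw [show (-((m : ℤ) + 1)) = (-(m : ℤ)) + (-1) from by ring,
          zpow_add₀ hw0, norm_mul]
        simp [mul_assoc]
      have : ‖g w'‖ ≤ 2 * ‖sphDens w' • (ρ w' * w' ^ (-((m : ℤ) + 1)))‖ := by
        rw [hgn, norm_smul, Real.norm_of_nonneg (sphDens_nonneg w'), hzp]
        have hnn : 0 ≤ sphDens w' * ‖ρ w' * w' ^ (-(m : ℤ))‖ :=
          mul_nonneg (sphDens_nonneg _) (norm_nonneg _)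
        calc sphDens w' * ‖ρ w' * w' ^ (-(m : ℤ))‖ * ‖(w - w')⁻¹‖
            ≤ sphDens w' * ‖ρ w' * w' ^ (-(m : ℤ))‖ * (2 * (‖w'‖)⁻¹) :=
              mul_le_mul_of_nonneg_left hinv hnn
          _ = 2 * (sphDens w' * (‖ρ w' * w' ^ (-(m : ℤ))‖ * (‖w'‖)⁻¹)) := by ring
      calc ‖g w'‖ ≤ 2 * ‖sphDens w' • (ρ w' * w' ^ (-((m : ℤ) + 1)))‖ := this
        _ ≤ h w' := by
            rw [show h w' = c * auxPsi (w - w')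
              + 2 * ‖sphDens w' • (ρ w' * w' ^ (-((m : ℤ) + 1)))‖ from rfl]
            have : 0 ≤ c * auxPsi (w - w') := mul_nonneg hcnn (auxPsi_nonneg _)
            linarith
  -- put everything together
  have hnorm : ‖∫ w' : ℂ, g w'‖ ≤ c * K + 2 * L := by
    calc ‖∫ w' : ℂ, g w'‖ ≤ ∫ w' : ℂ, ‖g w'‖ := norm_integral_le_integral_norm g
      _ ≤ ∫ w' : ℂ, h w' :=
          integral_mono_of_nonneg (Filter.Eventually.of_forall fun _ => norm_nonneg _)
            hhint hdom
      _ = c * K + 2 * L := hhval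
  rw [show (m + 2 - 1 : ℕ) = m + 1 from rfl] at *
  rw [hcomb, integral_congr_ae hae, integral_smul, norm_smul, norm_pow,
    mul_comm ((c * K + 2 * L + 1)) (‖w‖ ^ (m + 2))]
  apply mul_le_mul_of_nonneg_left _ (by positivity)
  linarith
end

section
/- Suppose u is a rotationally symmetric solution (about the axis through x₀) of Δu + |φ|₀² e^{2u} − 4π = 0 on S², where φ is a holomorphic section of L ⊗ T^{1,0}S² with divisor (k−2)x₀, k > 2, and |φ|₀ is its norm in the round metric H₀. Then the coefficients b_j = ∫_{S²} |φ|²_{H_u} g^{−1} w^{−j+1} dν computed in the stereographic chart w centered so that w(x₀) = ∞ satisfy b₁ ≠ 0 and b_j = 0 for 2 ≤ j ≤ k−1. -/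
/-!
STATEMENT 18 (vanishing of the coefficients b_j for a rotationally symmetric
solution).  With φ = g·ζ_L dz having divisor (k−2)x₀ one may choose the
stereographic chart w with w(−x₀) = 0 (so all zeros of φ sit at w = ∞) and
the trivialization so that g is constant; then the integrand of
b_j = ∫ |φ|²_{H_u} g⁻¹ w^{−j+1} dν is G(w)·w^{1−j} where
G = |φ|²_{H_u}/g = |ζ_L dz|²_{H₀} e^{2u} (in the chart) is a positive
function which, since u is invariant under the rotations about the axis
through x₀, is rotationally invariant: G(e^{iθ}w) = G(w).  ν is the round
area measure of total mass 1, dν = sphDens·dA.  Conclusion: b₁ ≠ 0 and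
b_j = 0 for 2 ≤ j ≤ k−1.
-/

open MeasureTheory

lemma sphDens_pos (w : ℂ) : 0 < sphDens w := by
  unfold sphDens
  positivity

lemma sphDens_rot (c : Circle) (w : ℂ) : sphDens ((c : ℂ) * w) = sphDens w := by
  unfold sphDens
  rw [norm_mul, Circle.norm_coe, one_mul]

/-- Change of variables under a rotation of ℂ. -/
lemma integral_rotation (c : Circle) (f : ℂ → ℂ) :
    ∫ w : ℂ, f ((c : ℂ) * w) = ∫ w : ℂ, f w := by
  have hmp : MeasurePreserving (rotation c) volume volume :=
    (rotation c).measurePreserving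
  have hme : MeasurableEmbedding (rotation c) :=
    (rotation c).toHomeomorph.measurableEmbedding
  simpa [rotation_apply] using hmp.integral_comp hme f

theorem coefficients_of_radial_solution
    (k : ℕ) (hk : 2 < k) (G : ℂ → ℝ)
    (hGpos : ∀ w : ℂ, 0 < G w)
    -- rotational symmetry of |φ|₀² and of the solution u about the axis
    (hGsym : ∀ (θ : ℝ) (w : ℂ), G (Complex.exp (θ * Complex.I) * w) = G w)
    (hGint : ∀ j : ℕ, 1 ≤ j → j ≤ k - 1 →
      Integrable (fun w : ℂ => sphDens w • ((G w : ℂ) * w ^ (1 - (j : ℤ)))))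
    (b : ℕ → ℂ)
    (hb : ∀ j : ℕ, b j = ∫ w : ℂ, sphDens w • ((G w : ℂ) * w ^ (1 - (j : ℤ)))) :
    b 1 ≠ 0 ∧ ∀ j : ℕ, 2 ≤ j → j ≤ k - 1 → b j = 0 := by
  constructor
  · -- b 1 ≠ 0 : real positive integral
    have h1k : (1 : ℕ) ≤ k - 1 := by omega
    have hint := hGint 1 le_rfl h1k
    have heq : (fun w : ℂ => sphDens w • ((G w : ℂ) * w ^ (1 - ((1 : ℕ) : ℤ)))) =
        fun w : ℂ => ((sphDens w * G w : ℝ) : ℂ) := by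
      funext w
      norm_num [Complex.real_smul]
    rw [heq] at hint
    have hintR : Integrable (fun w : ℂ => sphDens w * G w) := by
      simpa using hint.re
    have hpos : 0 < ∫ w : ℂ, sphDens w * G w := by
      rw [integral_pos_iff_support_of_nonneg
        (fun w => le_of_lt (mul_pos (sphDens_pos w) (hGpos w))) hintR]
      have hsupp : Function.support (fun w : ℂ => sphDens w * G w) = Set.univ := by
        ext w
        simp [Function.mem_support, (sphDens_pos w).ne', (hGpos w).ne']
      rw [hsupp]
      exact IsOpen.measure_pos volume isOpen_univ ⟨0, trivial⟩
    have hoR : (∫ w : ℂ, ((sphDens w * G w : ℝ) : ℂ)) =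
        ((∫ w : ℂ, sphDens w * G w : ℝ) : ℂ) := integral_ofReal
    rw [hb 1, heq, hoR]
    exact_mod_cast hpos.ne'

  · intro j hj hjk
    set m : ℤ := 1 - (j : ℤ) with hm
    have hmne : (m : ℝ) ≠ 0 := by
      have : m ≠ 0 := by omega
      exact_mod_cast this
    set θ : ℝ := Real.pi / (m : ℝ) with hθ
    set c : Circle := Circle.exp θ with hc
    have hcoe : (c : ℂ) = Complex.exp (θ * Complex.I) := Circle.coe_exp θ
    -- the rotation multiplies the integral by (c : ℂ) ^ m = -1
    have hrot : ∀ w : ℂ,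
        sphDens ((c : ℂ) * w) • ((G ((c : ℂ) * w) : ℂ) * ((c : ℂ) * w) ^ m) =
        (c : ℂ) ^ m * (sphDens w • ((G w : ℂ) * w ^ m)) := by
      intro w
      rw [sphDens_rot, hcoe, hGsym θ w, mul_zpow]
      simp [Complex.real_smul]
      ring
    have hmain : b j = (c : ℂ) ^ m * b j := by
      rw [hb j, ← hm]
      calc (∫ w : ℂ, sphDens w • ((G w : ℂ) * w ^ m))
          = ∫ w : ℂ, sphDens ((c : ℂ) * w) • ((G ((c : ℂ) * w) : ℂ) * ((c : ℂ) * w) ^ m) :=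
            (integral_rotation c _).symm
        _ = ∫ w : ℂ, (c : ℂ) ^ m * (sphDens w • ((G w : ℂ) * w ^ m)) := by
            simp only [hrot]
        _ = (c : ℂ) ^ m * ∫ w : ℂ, sphDens w • ((G w : ℂ) * w ^ m) :=
            integral_const_mul _ _
    have hcm : (c : ℂ) ^ m = -1 := by
      rw [hcoe, ← Complex.exp_int_mul]
      have : (m : ℂ) * ((θ : ℂ) * Complex.I) = Real.pi * Complex.I := by
        have hmC : (m : ℂ) ≠ 0 := by exact_mod_cast hmne
        rw [hθ]
        push_cast
        field_simp
      rw [this, Complex.exp_pi_mul_I]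
    rw [hcm] at hmain
    have : (2 : ℂ) * b j = 0 := by linear_combination hmain
    simpa using this
end
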